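/- arXiv:2109.00710 — 2 statements merged into one kernel-verified Lean document; each statement's English description precedes it below -/
import Mathlib

section
/- Let Ω be a bounded domain, φ the positive ground state Dirichlet eigenfunction with ‖φ‖_∞ = 1 and eigenvalue λ > 0, represented by Feynman–Kac. Fix 0 < μ < η ≤ 1 and x with φ(x) = μ. Then for all τ > 0, the probability ψ̃ that Brownian motion started at x hits the set {φ ≥ η} within time τ while remaining in Ω satisfies ψ̃ ≤ (μ/η)·(1 - e^{-λτ})/λ. -/
open MeasureTheory Real

/-- Let `φ` be the positive ground state Dirichlet eigenfunction of a
bounded domain `Ω`, with `‖φ‖_{L^∞(Ω)} = 1` (i.e. `0 < φ ≤ 1` on `Ω`) and eigenvalue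
`λ > 0`, represented via Feynman–Kac.  Fix `0 < μ < η ≤ 1` and `x ∈ Ω` with `φ(x) = μ`.
Then for all `τ > 0`, the probability `ψ̃(τ,x)` that Brownian motion started at `x`
hits `{φ ≥ η}` within time `τ` while remaining in `Ω`, which satisfies
`ψ̃(τ,x) ≤ ∫₀^τ P_x(ω(t) ∈ {φ ≥ η} and ω([0,t]) ⊆ Ω) dt`, obeys
`ψ̃(τ,x) ≤ (μ/η)·(1 - e^{-λτ})/λ`. -/
theorem stmt_6 {n : ℕ}
    (Ω : Set (EuclideanSpace ℝ (Fin n))) (hΩbdd : Bornology.IsBounded Ω)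
    (φ : EuclideanSpace ℝ (Fin n) → ℝ) (lam : ℝ) (hlam : 0 < lam)
    (hφpos : ∀ y ∈ Ω, 0 < φ y) (hφle : ∀ y ∈ Ω, φ y ≤ 1)
    {W : Type*} [MeasurableSpace W]
    (P : EuclideanSpace ℝ (Fin n) → Measure W) (hP : ∀ x, IsProbabilityMeasure (P x))
    (traj : W → ℝ → EuclideanSpace ℝ (Fin n))
    (hstart : ∀ x, ∀ᵐ w ∂(P x), traj w 0 = x)
    (hFK : ∀ x ∈ Ω, ∀ t : ℝ, 0 < t →
      Real.exp (-lam * t) * φ x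
        = ∫ w in {w | ∀ s ∈ Set.Icc (0:ℝ) t, traj w s ∈ Ω}, φ (traj w t) ∂(P x))
    (μ' η : ℝ) (hμη : 0 < μ') (hμltη : μ' < η) (hη : η ≤ 1)
    (x : EuclideanSpace ℝ (Fin n)) (hx : x ∈ Ω) (hφx : φ x = μ')
    (ψt : ℝ → ℝ)
    (hψt : ∀ τ : ℝ, 0 < τ → ψt τ ≤
      ∫ t in (0:ℝ)..τ,
        ((P x) {w | φ (traj w t) ∈ Set.Ici η ∧
          ∀ s ∈ Set.Icc (0:ℝ) t, traj w s ∈ Ω}).toReal)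
    (hψtnonneg : ∀ τ, 0 ≤ ψt τ) :
    ∀ τ : ℝ, 0 < τ → ψt τ ≤ (μ' / η) * ((1 - Real.exp (-lam * τ)) / lam) := by

  intro τ hτ
  have hη0 : 0 < η := hμη.trans hμltη
  haveI := hP x
  set F : ℝ → ℝ := fun t => ((P x) {w | φ (traj w t) ∈ Set.Ici η ∧
          ∀ s ∈ Set.Icc (0:ℝ) t, traj w s ∈ Ω}).toReal with hFdef
  have key : ∀ t : ℝ, 0 < t → F t ≤ (μ' / η) * Real.exp (-lam * t) := by
    intro t ht
    set S : Set W := {w | ∀ s ∈ Set.Icc (0:ℝ) t, traj w s ∈ Ω} with hS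
    set ν : Measure W := (P x).restrict S with hν
    set f : W → ℝ := fun w => φ (traj w t) with hf
    have hFKt : Real.exp (-lam * t) * μ' = ∫ w, f w ∂ν := by
      rw [← hφx]; exact hFK x hx t ht
    have hpos : 0 < Real.exp (-lam * t) * μ' := by positivity
    have hint : Integrable f ν := by
      by_contra h
      rw [MeasureTheory.integral_undef h] at hFKt
      linarith
    have hfS : ∀ w ∈ S, 0 ≤ f w := fun w hw =>
      (hφpos _ (hw t ⟨ht.le, le_refl t⟩)).le
    have hmk := hint.aestronglyMeasurable
    have hν0 : ν {w | f w ≠ hmk.mk f w} = 0 := hmk.ae_eq_mk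
    have hmkmeas : MeasurableSet {w | hmk.mk f w < 0} :=
      hmk.stronglyMeasurable_mk.measurable (measurableSet_Iio : MeasurableSet (Set.Iio (0:ℝ)))
    have hν1 : ν {w | hmk.mk f w < 0} = 0 := by
      have hre : ν {w | hmk.mk f w < 0} = (P x) ({w | hmk.mk f w < 0} ∩ S) :=
        Measure.restrict_apply hmkmeas
      rw [hre]
      refine le_antisymm ?_ (zero_le)
      calc (P x) ({w | hmk.mk f w < 0} ∩ S)
          ≤ (P x) ({w | f w ≠ hmk.mk f w} ∩ S) := by
            refine measure_mono fun w hw => ⟨fun hfe => ?_, hw.2⟩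
            have := hfS w hw.2
            rw [hfe] at this
            exact absurd hw.1 (not_lt.mpr this)
        _ ≤ ν {w | f w ≠ hmk.mk f w} := Measure.le_restrict_apply _ _
        _ = 0 := hν0
    have hnn : 0 ≤ᵐ[ν] f := by
      have hu : ν ({w | f w ≠ hmk.mk f w} ∪ {w | hmk.mk f w < 0}) = 0 :=
        measure_union_null hν0 hν1
      have hz : ν {w | f w < 0} = 0 := by
        refine measure_mono_null (fun w hw => ?_) hu
        by_cases h : f w = hmk.mk f w
        · exact Or.inr (by simpa [← h] using hw)
        · exact Or.inl h
      rw [Filter.EventuallyLE, ae_iff]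
      simpa [not_le] using hz
    have markov := mul_meas_ge_le_integral_of_nonneg hnn hint η
    have hPE : (P x) {w | φ (traj w t) ∈ Set.Ici η ∧ ∀ s ∈ Set.Icc (0:ℝ) t, traj w s ∈ Ω}
        ≤ ν {w | η ≤ f w} := by
      calc (P x) {w | φ (traj w t) ∈ Set.Ici η ∧ ∀ s ∈ Set.Icc (0:ℝ) t, traj w s ∈ Ω}
          ≤ (P x) ({w | η ≤ f w} ∩ S) := measure_mono fun w hw => ⟨hw.1, hw.2⟩
        _ ≤ ν {w | η ≤ f w} := Measure.le_restrict_apply _ _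
    have hfin : ν {w | η ≤ f w} ≠ ⊤ := measure_ne_top ν _
    have htr : F t ≤ (ν {w | η ≤ f w}).toReal := ENNReal.toReal_mono hfin hPE
    have hmar : η * (ν {w | η ≤ f w}).toReal ≤ Real.exp (-lam * t) * μ' := by
      rw [hFKt]; exact markov
    calc F t ≤ (ν {w | η ≤ f w}).toReal := htr
      _ ≤ (Real.exp (-lam * t) * μ') / η := by rw [le_div_iff₀ hη0]; linarith
      _ = (μ' / η) * Real.exp (-lam * t) := by ring
  have key0 : F 0 = 0 := by
    have h0 : (P x) {w | φ (traj w 0) ∈ Set.Ici η ∧ ∀ s ∈ Set.Icc (0:ℝ) 0, traj w s ∈ Ω} = 0 := by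
      refine measure_mono_null (fun w hw => ?_) (ae_iff.mp (hstart x))
      intro heq
      have h1 : η ≤ φ (traj w 0) := hw.1
      rw [heq, hφx] at h1
      exact absurd h1 (not_le.mpr hμltη)
    simp only [hFdef, h0, ENNReal.toReal_zero]
  by_cases hInt : IntervalIntegrable F MeasureTheory.volume 0 τ
  · have hgc : Continuous fun t : ℝ => (μ' / η) * Real.exp (-lam * t) := by continuity
    have hg : IntervalIntegrable (fun t : ℝ => (μ' / η) * Real.exp (-lam * t))
        MeasureTheory.volume 0 τ := hgc.intervalIntegrable 0 τ
    have hmono : (∫ t in (0:ℝ)..τ, F t)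
        ≤ ∫ t in (0:ℝ)..τ, (μ' / η) * Real.exp (-lam * t) := by
      refine intervalIntegral.integral_mono_on hτ.le hInt hg fun t ht => ?_
      rcases eq_or_lt_of_le ht.1 with h | h
      · rw [← h, key0]
        positivity
      · exact key t h
    have hexp : (∫ t in (0:ℝ)..τ, Real.exp (-lam * t))
        = (1 - Real.exp (-lam * τ)) / lam := by
      have hderiv : ∀ t ∈ Set.uIcc (0:ℝ) τ,
          HasDerivAt (fun u : ℝ => -(Real.exp (-lam * u) / lam)) (Real.exp (-lam * t)) t := by
        intro t _
        have h1 : HasDerivAt (fun u : ℝ => -lam * u) (-lam) t := by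
          simpa using (hasDerivAt_id t).const_mul (-lam)
        have h2 := (Real.hasDerivAt_exp (-lam * t)).comp t h1
        have h3 := (h2.div_const lam).neg
        have h4 : -(Real.exp (-lam * t) * -lam / lam) = Real.exp (-lam * t) := by
          field_simp
        exact h4 ▸ h3
      have hcont : IntervalIntegrable (fun t : ℝ => Real.exp (-lam * t))
          MeasureTheory.volume 0 τ := by
        exact Continuous.intervalIntegrable (by fun_prop) 0 τ
      rw [intervalIntegral.integral_eq_sub_of_hasDerivAt hderiv hcont]
      simp only [mul_zero, Real.exp_zero]
      field_simp
      ring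
    have hgval : (∫ t in (0:ℝ)..τ, (μ' / η) * Real.exp (-lam * t))
        = (μ' / η) * ((1 - Real.exp (-lam * τ)) / lam) := by
      rw [intervalIntegral.integral_const_mul, hexp]
    calc ψt τ ≤ ∫ t in (0:ℝ)..τ, F t := hψt τ hτ
      _ ≤ ∫ t in (0:ℝ)..τ, (μ' / η) * Real.exp (-lam * t) := hmono
      _ = (μ' / η) * ((1 - Real.exp (-lam * τ)) / lam) := hgval
  · have h0 := hψt τ hτ
    rw [intervalIntegral.integral_undef hInt] at h0
    have hexple : Real.exp (-lam * τ) ≤ 1 := by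
      rw [Real.exp_le_one_iff]
      nlinarith
    have : 0 ≤ (μ' / η) * ((1 - Real.exp (-lam * τ)) / lam) := by
      apply mul_nonneg (by positivity)
      apply div_nonneg _ hlam.le
      linarith
    linarith
end

section
/- For every ε > 0 and every n ≥ 1 there exists c₀ > 0 such that for all c ≥ c₀ and all t > 0, if r² = c·t then (1/Γ(n/2)) ∫₀ᵗ Γ(n/2, r²/(4s)) ds ≤ ((1+ε)/Γ(n/2)) · c^{n/2 - 1} · t · e^{-r²/(4t)}, where Γ(s,x) = ∫_x^∞ e^{-u} u^{s-1} du is the upper incomplete Gamma function. -/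
set_option maxHeartbeats 1000000
open MeasureTheory Real intervalIntegral

-- key monotonicity: v ↦ v^(a-1) e^{-v/2} decreasing past 2a (when base ≥ 1)
lemma aux1 {a x u : ℝ} (hx1 : 1 ≤ x) (hx : 2*a ≤ x) (hu : x ≤ u) :
    u ^ (a-1) * Real.exp (-(u/2)) ≤ x ^ (a-1) * Real.exp (-(x/2)) := by
  have hx0 : 0 < x := by linarith
  have hu0 : 0 < u := by linarith
  have hlog : Real.log x ≤ Real.log u := Real.log_le_log hx0 hu
  have key : Real.log u * (a-1) + -(u/2) ≤ Real.log x * (a-1) + -(x/2) := by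
    rcases le_or_gt a 1 with h | h
    · nlinarith [hlog, hu]
    · have h2 : Real.log u - Real.log x ≤ (u - x)/x := by
        have := Real.log_le_sub_one_of_pos (show 0 < u/x by positivity)
        rw [Real.log_div hu0.ne' hx0.ne'] at this
        calc Real.log u - Real.log x ≤ u/x - 1 := this
          _ = (u-x)/x := by field_simp
      have h3 : (a-1) * ((u-x)/x) ≤ (u-x)/2 := by
        rw [show (a-1)*((u-x)/x) = (a-1)*(u-x)/x from (mul_div_assoc _ _ _).symm,
          div_le_div_iff₀ hx0 two_pos]
        nlinarith
      nlinarith [mul_le_mul_of_nonneg_left h2 (by linarith : (0:ℝ) ≤ a - 1)]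
  calc u ^ (a-1) * Real.exp (-(u/2)) = Real.exp (Real.log u * (a-1) + -(u/2)) := by
        rw [Real.exp_add, Real.rpow_def_of_pos hu0]
    _ ≤ Real.exp (Real.log x * (a-1) + -(x/2)) := Real.exp_le_exp.mpr key
    _ = x ^ (a-1) * Real.exp (-(x/2)) := by rw [Real.exp_add, Real.rpow_def_of_pos hx0]

/-- The upper incomplete Gamma function `Γ(s,x) = ∫_x^∞ e^{-u} u^{s-1} du`. -/
noncomputable def upperIncGamma (s x : ℝ) : ℝ :=
  ∫ u in Set.Ioi x, Real.exp (-u) * u ^ (s - 1)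

lemma upperIncGamma_nonneg {a x : ℝ} (hx : 0 ≤ x) : 0 ≤ upperIncGamma a x := by
  refine setIntegral_nonneg measurableSet_Ioi fun u hu => ?_
  have : (0:ℝ) ≤ u := le_trans hx (le_of_lt hu)
  positivity

lemma upperIncGamma_le_of_le {a x y : ℝ} (ha : 0 < a) (hx : 0 ≤ x) (hxy : x ≤ y) :
    upperIncGamma a y ≤ upperIncGamma a x := by
  refine setIntegral_mono_set
    ((Real.GammaIntegral_convergent ha).mono_set fun u hu => ?_)
    ((ae_restrict_iff' measurableSet_Ioi).2 (Filter.Eventually.of_forall fun u hu => ?_))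
    (HasSubset.Subset.eventuallyLE (Set.Ioi_subset_Ioi hxy))
  · rcases eq_or_lt_of_le hx with h | h
    · exact lt_of_le_of_lt h.le hu
    · exact lt_trans h hu
  · have : (0:ℝ) < u := lt_of_le_of_lt hx hu
    positivity

lemma aux2 {a x : ℝ} (ha : 0 < a) (hx1 : 1 ≤ x) (hx : 2*a ≤ x) :
    upperIncGamma a x ≤ 2 * x ^ (a-1) * Real.exp (-x) := by
  have hx0 : 0 < x := by linarith
  have hint : IntegrableOn (fun u : ℝ => Real.exp (-u) * u ^ (a-1)) (Set.Ioi x) :=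
    (Real.GammaIntegral_convergent ha).mono_set (Set.Ioi_subset_Ioi (by linarith))
  have hgint : IntegrableOn (fun u : ℝ => x ^ (a-1) * Real.exp (-(x/2)) * Real.exp (-(2⁻¹ * u)))
      (Set.Ioi x) := by
    have base : IntegrableOn (fun u : ℝ => Real.exp (-(2⁻¹*u))) (Set.Ioi x) := by
      simpa only [neg_mul] using exp_neg_integrableOn_Ioi x (show (0:ℝ) < 2⁻¹ by norm_num)
    exact base.const_mul _
  have hle : upperIncGamma a x
      ≤ ∫ u in Set.Ioi x, x ^ (a-1) * Real.exp (-(x/2)) * Real.exp (-(2⁻¹ * u)) := by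
    refine setIntegral_mono_on hint hgint measurableSet_Ioi fun u hu => ?_
    have hu' : x ≤ u := le_of_lt hu
    have hu0 : 0 < u := lt_trans hx0 hu
    have h1 := aux1 hx1 hx hu'
    calc Real.exp (-u) * u ^ (a-1) = (u ^ (a-1) * Real.exp (-(u/2))) * Real.exp (-(2⁻¹*u)) := by
          rw [mul_comm (Real.exp (-u)), mul_assoc, ← Real.exp_add]; ring_nf
      _ ≤ (x ^ (a-1) * Real.exp (-(x/2))) * Real.exp (-(2⁻¹*u)) := by
          exact mul_le_mul_of_nonneg_right h1 (Real.exp_nonneg _)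
  have hcalc : (∫ u in Set.Ioi x, x ^ (a-1) * Real.exp (-(x/2)) * Real.exp (-(2⁻¹ * u)))
      = 2 * x ^ (a-1) * Real.exp (-x) := by
    rw [MeasureTheory.integral_const_mul]
    have key := MeasureTheory.integral_comp_mul_left_Ioi (g := fun u => Real.exp (-u)) (a := x)
      (show (0:ℝ) < 2⁻¹ by norm_num)
    simp only [smul_eq_mul, integral_exp_neg_Ioi] at key
    have hmer : Real.exp (-(x/2)) * Real.exp (-(2⁻¹*x)) = Real.exp (-x) := by
      rw [← Real.exp_add]; congr 1; ring
    rw [key, show ((2:ℝ)⁻¹)⁻¹ = (2:ℝ) by norm_num]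
    calc x^(a-1) * Real.exp (-(x/2)) * (2 * Real.exp (-(2⁻¹*x)))
        = 2 * x^(a-1) * (Real.exp (-(x/2)) * Real.exp (-(2⁻¹*x))) := by ring
      _ = 2 * x^(a-1) * Real.exp (-x) := by rw [hmer]
  rw [hcalc] at hle
  exact hle

lemma upperIncGamma_le_Gamma {a x : ℝ} (ha : 0 < a) (hx : 0 ≤ x) :
    upperIncGamma a x ≤ Real.Gamma a := by
  rw [Real.Gamma_eq_integral ha]
  exact upperIncGamma_le_of_le ha le_rfl hx

/-- For every `ε > 0` and every `n ≥ 1` there exists `c₀ > 0` such that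
for all `c ≥ c₀`, `t > 0` and `r` with `r² = c·t`,
`(1/Γ(n/2)) ∫₀ᵗ Γ(n/2, r²/(4s)) ds ≤ ((1+ε)/Γ(n/2)) · c^{n/2-1} · t · e^{-r²/(4t)}`. -/
theorem stmt_12 (ε : ℝ) (hε : 0 < ε) (n : ℕ) (hn : 1 ≤ n) :
    ∃ c₀ > (0:ℝ), ∀ c : ℝ, c₀ ≤ c → ∀ t r : ℝ, 0 < t → r ^ 2 = c * t →
      (1 / Real.Gamma ((n : ℝ) / 2))
          * ∫ s in (0:ℝ)..t, upperIncGamma ((n : ℝ) / 2) (r ^ 2 / (4 * s))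
        ≤ ((1 + ε) / Real.Gamma ((n : ℝ) / 2)) * c ^ ((n : ℝ) / 2 - 1) * t
          * Real.exp (-r ^ 2 / (4 * t)) := by
  set a : ℝ := (n : ℝ) / 2 with ha_def
  have hn1 : (1:ℝ) ≤ (n:ℝ) := by exact_mod_cast hn
  have ha2 : 1/2 ≤ a := by rw [ha_def]; linarith
  have ha : 0 < a := by linarith
  have hΓ : 0 < Real.Gamma a := Real.Gamma_pos_of_pos ha
  refine ⟨32 + 8*a, by positivity, fun c hc t r ht hr => ?_⟩
  have hc32 : 32 ≤ c := by linarith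
  have hc8a : 8*a ≤ c := by linarith
  have hc0 : 0 < c := by linarith
  -- the integrand and the dominating function
  set β : ℝ := c/(8*t) with hβ_def
  have hβ : 0 < β := by positivity
  set C : ℝ := 2 * (c/4)^(a-1) * Real.exp (-(c/8)) * Real.exp (-(c/4)) with hC_def
  have hC : 0 ≤ C := by positivity
  -- pointwise bound on Ioc 0 t
  have hpt : ∀ s ∈ Set.Ioc (0:ℝ) t, upperIncGamma a (r^2/(4*s)) ≤ C * Real.exp (β*s) := by
    intro s hs
    obtain ⟨hs0, hst⟩ := hs
    set x : ℝ := r^2/(4*s) with hx_def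
    have hx4 : c/4 ≤ x := by
      rw [hx_def, hr, div_le_div_iff₀ (by norm_num) (by positivity)]
      nlinarith
    have hc41 : (1:ℝ) ≤ c/4 := by linarith
    have hc42 : 2*a ≤ c/4 := by linarith
    have hx1 : (1:ℝ) ≤ x := le_trans hc41 hx4
    have hx2a : 2*a ≤ x := le_trans hc42 hx4
    have step1 : upperIncGamma a x ≤ 2 * x^(a-1) * Real.exp (-x) := aux2 ha hx1 hx2a
    have step2 : x^(a-1) * Real.exp (-(x/2)) ≤ (c/4)^(a-1) * Real.exp (-(c/4/2)) :=
      aux1 hc41 hc42 hx4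
    have step3 : Real.exp (-(x/2)) ≤ Real.exp (β*s) * Real.exp (-(c/4)) := by
      rw [← Real.exp_add, Real.exp_le_exp]
      have hx_val : x = c*t/(4*s) := by rw [hx_def, hr]
      rw [hx_val, hβ_def]
      have key : c/(8*t)*s + -(c/4) - -(c*t/(4*s)/2) = c * (t-s)^2 / (8*s*t) := by
        field_simp; ring
      nlinarith [div_nonneg (mul_nonneg hc0.le (sq_nonneg (t-s))) (by positivity : (0:ℝ) ≤ 8*s*t), key]
    calc upperIncGamma a x ≤ 2 * x^(a-1) * Real.exp (-x) := step1
      _ = 2 * (x^(a-1) * Real.exp (-(x/2))) * Real.exp (-(x/2)) := by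
          rw [show Real.exp (-x) = Real.exp (-(x/2)) * Real.exp (-(x/2)) by
            rw [← Real.exp_add]; congr 1; ring]
          ring
      _ ≤ 2 * ((c/4)^(a-1) * Real.exp (-(c/4/2))) * (Real.exp (β*s) * Real.exp (-(c/4))) := by
          apply mul_le_mul (by nlinarith [Real.exp_nonneg (-(c/4/2)), step2]) step3
            (Real.exp_nonneg _) (by positivity)
      _ = C * Real.exp (β*s) := by
          rw [hC_def, show c/4/2 = c/8 by ring]; ring
  -- measurability / integrability
  set f : ℝ → ℝ := fun s => upperIncGamma a (r^2/(4*s)) with hf_def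
  have hFanti : Antitone (fun x : ℝ => upperIncGamma a (max x 0)) := by
    intro x y hxy
    exact upperIncGamma_le_of_le ha (le_max_right x 0) (max_le_max hxy le_rfl)
  have hmeas : Measurable (fun s : ℝ => upperIncGamma a (max (r^2/(4*s)) 0)) :=
    hFanti.measurable.comp (by fun_prop)
  have hfeq : Set.EqOn (fun s : ℝ => upperIncGamma a (max (r^2/(4*s)) 0)) f (Set.Ioc 0 t) := by
    intro s hs
    have hs0 : 0 < s := hs.1
    have h0 : 0 ≤ r^2/(4*s) := by rw [hr]; positivity
    simp only [hf_def, max_eq_left h0]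
  have hfint : IntegrableOn f (Set.Ioc (0:ℝ) t) := by
    refine (Measure.integrableOn_of_bounded (M := Real.Gamma a) measure_Ioc_lt_top.ne
      hmeas.aestronglyMeasurable (Filter.Eventually.of_forall fun s => ?_)).congr_fun
      hfeq measurableSet_Ioc
    have h1 : 0 ≤ upperIncGamma a (max (r^2/(4*s)) 0) := upperIncGamma_nonneg (le_max_right _ _)
    have h2 : upperIncGamma a (max (r^2/(4*s)) 0) ≤ Real.Gamma a :=
      upperIncGamma_le_Gamma ha (le_max_right _ _)
    rw [Real.norm_eq_abs, abs_of_nonneg h1]; exact h2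
  have hgint : IntegrableOn (fun s => C * Real.exp (β*s)) (Set.Ioc (0:ℝ) t) :=
    (Continuous.integrableOn_Ioc (continuous_const.mul (Real.continuous_exp.comp (continuous_const.mul continuous_id))))
  have hmono : ∫ s in Set.Ioc (0:ℝ) t, f s ≤ ∫ s in Set.Ioc (0:ℝ) t, C * Real.exp (β*s) :=
    setIntegral_mono_on hfint hgint measurableSet_Ioc hpt
  have hIg : ∫ s in Set.Ioc (0:ℝ) t, C * Real.exp (β*s) = C * (β⁻¹ * (Real.exp (β*t) - 1)) := by
    rw [MeasureTheory.integral_const_mul, ← intervalIntegral.integral_of_le ht.le,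
      intervalIntegral.integral_comp_mul_left Real.exp hβ.ne', integral_exp]
    simp [Real.exp_zero, smul_eq_mul, mul_zero]
  have hβt : β * t = c/8 := by rw [hβ_def]; field_simp
  have hβinv : β⁻¹ = 8*t/c := by rw [hβ_def]; field_simp
  -- power comparison
  have hrpow0 : (0:ℝ) ≤ c^(a-1) := Real.rpow_nonneg hc0.le _
  have hpow : (c/4)^(a-1) ≤ 2 * c^(a-1) := by
    rw [Real.div_rpow hc0.le (by norm_num), div_le_iff₀ (Real.rpow_pos_of_pos (by norm_num) _)]
    have h44 : (4:ℝ)^(-(2⁻¹):ℝ) = 1/2 := by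
      rw [Real.rpow_neg (by norm_num), show ((2:ℝ)⁻¹) = (1/2:ℝ) by norm_num,
        ← Real.sqrt_eq_rpow, show (4:ℝ) = 2^2 by norm_num, Real.sqrt_sq (by norm_num)]
      norm_num
    have h4 : (1:ℝ)/2 ≤ (4:ℝ)^(a-1) := by
      rw [← h44]
      exact Real.rpow_le_rpow_of_exponent_le (by norm_num) (by linarith)
    linarith [mul_le_mul_of_nonneg_left h4 hrpow0]
  have hCb : C * (β⁻¹ * (Real.exp (β*t) - 1)) ≤ (1+ε) * c^(a-1) * t * Real.exp (-(c/4)) := by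
    have e1 : Real.exp (β*t) - 1 ≤ Real.exp (β*t) := by nlinarith
    have step : C * (β⁻¹ * (Real.exp (β*t) - 1)) ≤ C * (β⁻¹ * Real.exp (β*t)) := by
      have : β⁻¹ * (Real.exp (β*t) - 1) ≤ β⁻¹ * Real.exp (β*t) :=
        mul_le_mul_of_nonneg_left e1 (by positivity)
      exact mul_le_mul_of_nonneg_left this hC
    have heq : C * (β⁻¹ * Real.exp (β*t)) = 16 * (c/4)^(a-1) * (t/c) * Real.exp (-(c/4)) := by
      rw [hβt, hβinv, hC_def]
      have hee : Real.exp (-(c/8)) * Real.exp (c/8) = 1 := by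
        rw [← Real.exp_add]; simp
      calc 2 * (c/4)^(a-1) * Real.exp (-(c/8)) * Real.exp (-(c/4)) * (8*t/c * Real.exp (c/8))
          = (Real.exp (-(c/8)) * Real.exp (c/8)) * (2 * (c/4)^(a-1) * Real.exp (-(c/4)) * (8*t/c)) := by
            ring
        _ = 16 * (c/4)^(a-1) * (t/c) * Real.exp (-(c/4)) := by rw [hee]; ring
    have hfin : 16 * (c/4)^(a-1) * (t/c) * Real.exp (-(c/4))
        ≤ (1+ε) * c^(a-1) * t * Real.exp (-(c/4)) := by
      have hE : (0:ℝ) < Real.exp (-(c/4)) := Real.exp_pos _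
      have key : 16 * (c/4)^(a-1) * (t/c) ≤ (1+ε) * c^(a-1) * t := by
        have h1 : 16 * (c/4)^(a-1) ≤ 32 * c^(a-1) := by nlinarith
        have h2 : 16 * (c/4)^(a-1) * (t/c) ≤ 32 * c^(a-1) * (t/c) :=
          mul_le_mul_of_nonneg_right h1 (by positivity)
        have h3 : 32 * c^(a-1) * (t/c) ≤ c^(a-1) * t := by
          rw [mul_div_assoc', div_le_iff₀ hc0]
          nlinarith [mul_nonneg hrpow0 ht.le]
        have h4 : c^(a-1) * t ≤ (1+ε) * c^(a-1) * t := by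
          nlinarith [mul_nonneg hrpow0 ht.le]
        linarith
      exact mul_le_mul_of_nonneg_right key hE.le
    exact le_trans (le_trans step (le_of_eq heq)) hfin
  have hI : ∫ s in (0:ℝ)..t, f s ≤ (1+ε) * c^(a-1) * t * Real.exp (-(c/4)) := by
    rw [intervalIntegral.integral_of_le ht.le]
    exact le_trans (le_trans hmono (le_of_eq hIg)) hCb
  have hexp : Real.exp (-r^2/(4*t)) = Real.exp (-(c/4)) := by
    congr 1; rw [hr]; field_simp
  rw [hexp]
  calc (1 / Real.Gamma a) * ∫ s in (0:ℝ)..t, f s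
      ≤ (1 / Real.Gamma a) * ((1+ε) * c^(a-1) * t * Real.exp (-(c/4))) :=
        mul_le_mul_of_nonneg_left hI (by positivity)
    _ = ((1+ε) / Real.Gamma a) * c^(a-1) * t * Real.exp (-(c/4)) := by ring
end
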